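/- Let N ≥ 1, let x_1, …, x_N be the N distinct real roots of H_N, and define w_i = (N−1)!/(N·H_{N−1}(x_i)²). Then each w_i is positive and for every polynomial p of degree at most 2N−1 one has ∑_{i=1}^N w_i · p(x_i) = ∫_ℝ p dμ; in particular ∑_{i=1}^N w_i = 1. -/

import Mathlib

open MeasureTheory ProbabilityTheory

/-- Probabilists' Hermite polynomial evaluated at a real number. -/
noncomputable def H (n : ℕ) (x : ℝ) : ℝ := Polynomial.aeval x (Polynomial.hermite n)

/-- The standard Gaussian measure on ℝ. -/
noncomputable def stdGauss : Measure ℝ := gaussianReal 0 1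

open Polynomial Filter Real


lemma integrable_pow_gauss (n : ℕ) :
    Integrable (fun x : ℝ => x ^ n * Real.exp (-(x ^ 2 / 2))) := by
  have h := integrable_rpow_mul_exp_neg_mul_sq (b := (1:ℝ)/2) (by norm_num) (s := (n:ℝ))
    (by exact lt_of_lt_of_le (by norm_num) (Nat.cast_nonneg n))
  have e : ∀ x : ℝ, rexp (-(2⁻¹ * x ^ 2)) = rexp (-(x ^ 2 / 2)) := by
    intro x; ring_nf
  simpa [Real.rpow_natCast, e] using h

lemma integrable_poly_gauss (p : ℝ[X]) :
    Integrable (fun x : ℝ => p.eval x * Real.exp (-(x ^ 2 / 2))) := by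
  induction p using Polynomial.induction_on' with
  | monomial n c =>
      simpa [Polynomial.eval_monomial, mul_assoc] using (integrable_pow_gauss n).const_mul c
  | add p q hp hq =>
      simp only [Polynomial.eval_add, add_mul]; exact hp.add hq

lemma tendsto_poly_gauss_top (p : ℝ[X]) :
    Tendsto (fun x : ℝ => p.eval x * Real.exp (-(x ^ 2 / 2))) atTop (nhds 0) := by
  have h1 : Tendsto (fun x : ℝ => x - x ^ 2 / 2) atTop atBot := by
    apply tendsto_atBot_mono' atTop (Filter.eventually_atTop.2 ⟨4, fun x hx => ?_⟩)
      tendsto_neg_atTop_atBot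
    nlinarith
  have h2 : Tendsto (fun x : ℝ => Real.exp (x - x ^ 2 / 2)) atTop (nhds 0) :=
    Real.tendsto_exp_atBot.comp h1
  have h3 := (p.tendsto_div_exp_atTop).mul h2
  rw [mul_zero] at h3
  refine h3.congr fun x => ?_
  rw [div_mul_eq_mul_div, mul_div_assoc, ← Real.exp_sub]
  ring_nf

lemma tendsto_poly_gauss_bot (p : ℝ[X]) :
    Tendsto (fun x : ℝ => p.eval x * Real.exp (-(x ^ 2 / 2))) atBot (nhds 0) := by
  have h := tendsto_poly_gauss_top (p.comp (-X))
  have h2 := h.comp tendsto_neg_atBot_atTop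
  refine h2.congr fun x => ?_
  simp [Function.comp, Polynomial.eval_comp]

lemma stein_poly (p : ℝ[X]) :
    ∫ x : ℝ, (derivative p - X * p).eval x * Real.exp (-(x ^ 2 / 2)) = 0 := by
  have hderiv : ∀ x : ℝ, HasDerivAt (fun y : ℝ => p.eval y * Real.exp (-(y ^ 2 / 2)))
      ((derivative p - X * p).eval x * Real.exp (-(x ^ 2 / 2))) x := by
    intro x
    have h1 : HasDerivAt (fun y : ℝ => p.eval y) ((derivative p).eval x) x :=
      p.hasDerivAt x
    have h2 : HasDerivAt (fun y : ℝ => Real.exp (-(y ^ 2 / 2))) (-x * Real.exp (-(x ^ 2 / 2))) x := by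
      have : HasDerivAt (fun y : ℝ => -(y ^ 2 / 2)) (-x) x := by
        exact (((hasDerivAt_pow 2 x).div_const 2).neg).congr_deriv (by norm_num)
      have h3 := this.exp
      convert h3 using 1; ring
    have := h1.mul h2
    refine this.congr_deriv ?_
    simp [Polynomial.eval_mul]
    ring
  have := integral_of_hasDerivAt_of_tendsto hderiv (integrable_poly_gauss _)
    (tendsto_poly_gauss_bot p) (tendsto_poly_gauss_top p)
  simpa using this


/-- Real-coefficient Hermite polynomial. -/
noncomputable def HP (n : ℕ) : ℝ[X] := (Polynomial.hermite n).map (Int.castRingHom ℝ)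

lemma HP_eval (n : ℕ) (t : ℝ) : (HP n).eval t = H n t := by
  rw [HP, H, Polynomial.aeval_def, Polynomial.eval₂_eq_eval_map]
  norm_num

lemma HP_zero : HP 0 = 1 := by simp [HP]

lemma HP_one : HP 1 = X := by simp [HP, Polynomial.hermite_one]

lemma HP_succ (n : ℕ) : HP (n + 1) = X * HP n - derivative (HP n) := by
  simp [HP, Polynomial.hermite_succ, Polynomial.derivative_map, Polynomial.map_sub]

lemma HP_deriv (n : ℕ) : derivative (HP (n + 1)) = C ((n : ℝ) + 1) * HP n := by
  induction n with
  | zero => simp [HP_one, HP_zero]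
  | succ n ih =>
      rw [HP_succ (n + 1)]
      rw [derivative_sub, derivative_mul, derivative_X, one_mul, ih,
        derivative_mul, derivative_C, zero_mul, zero_add]
      have hd : derivative (HP n) = X * HP n - HP (n + 1) := by
        rw [HP_succ n]; ring
      rw [hd]
      push_cast
      simp only [Polynomial.C_add, Polynomial.C_1]
      ring

lemma HP_rec (n : ℕ) : HP (n + 2) = X * HP (n + 1) - C ((n : ℝ) + 1) * HP n := by
  rw [HP_succ (n + 1), HP_deriv]

lemma H_rec (n : ℕ) (t : ℝ) : H (n + 2) t = t * H (n + 1) t - ((n : ℝ) + 1) * H n t := by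
  rw [← HP_eval, ← HP_eval, ← HP_eval, HP_rec]
  simp

lemma H_zero (t : ℝ) : H 0 t = 1 := by rw [← HP_eval, HP_zero]; simp

lemma H_one (t : ℝ) : H 1 t = t := by rw [← HP_eval, HP_one]; simp

lemma HP_monic (n : ℕ) : (HP n).Monic := (Polynomial.hermite_monic n).map _

lemma HP_natDegree (n : ℕ) : (HP n).natDegree = n := by
  rw [HP, Polynomial.natDegree_map_eq_of_injective (Int.castRingHom ℝ).injective_int]
  exact Polynomial.natDegree_hermite

/-- Consecutive Hermite polynomials have no common root. -/
lemma H_no_common_root (n : ℕ) (t : ℝ) (h1 : H (n + 1) t = 0) (h0 : H n t = 0) : False := by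
  induction n with
  | zero => rw [H_zero] at h0; norm_num at h0
  | succ n ih =>
      apply ih h0
      have := H_rec n t
      rw [h1, h0] at this
      have hn : ((n : ℝ) + 1) ≠ 0 := by positivity
      have := mul_eq_zero.mp (by linarith : ((n:ℝ)+1) * H n t = 0)
      tauto

/-- Christoffel–Darboux, pointwise. -/
lemma CD (n : ℕ) (s t : ℝ) :
    H (n + 1) s * H n t - H n s * H (n + 1) t =
      (s - t) * ∑ k ∈ Finset.range (n + 1),
        ((n.factorial : ℝ) / (k.factorial : ℝ)) * H k s * H k t := by
  induction n with
  | zero => simp [H_zero, H_one]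
  | succ n ih =>
      rw [Finset.sum_range_succ]
      have hsum : ∑ k ∈ Finset.range (n + 1),
          (((n+1).factorial : ℝ) / (k.factorial : ℝ)) * H k s * H k t
          = ((n : ℝ) + 1) * ∑ k ∈ Finset.range (n + 1),
            ((n.factorial : ℝ) / (k.factorial : ℝ)) * H k s * H k t := by
        rw [Finset.mul_sum]
        refine Finset.sum_congr rfl fun k _ => ?_
        rw [Nat.factorial_succ]
        push_cast
        ring
      rw [hsum, H_rec n s, H_rec n t]
      have hself : (((n+1).factorial : ℝ) / ((n+1).factorial : ℝ)) = 1 :=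
        div_self (by exact_mod_cast (n+1).factorial_ne_zero)
      rw [hself]
      nlinarith [ih]

/-- The Gaussian-weighted Lebesgue integral of a polynomial. -/
noncomputable def I (p : ℝ[X]) : ℝ := ∫ x : ℝ, p.eval x * Real.exp (-(x ^ 2 / 2))

lemma I_add (p q : ℝ[X]) : I (p + q) = I p + I q := by
  rw [I, I, I, ← integral_add (integrable_poly_gauss p) (integrable_poly_gauss q)]
  simp [add_mul]

lemma I_Cmul (a : ℝ) (p : ℝ[X]) : I (C a * p) = a * I p := by
  rw [I, I, ← integral_const_mul]
  simp [mul_assoc]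

lemma I_sum {α : Type*} (s : Finset α) (f : α → ℝ[X]) : I (∑ k ∈ s, f k) = ∑ k ∈ s, I (f k) := by
  classical
  induction s using Finset.induction_on with
  | empty => simp [I]
  | insert a s h ih => rw [Finset.sum_insert h, I_add, ih, Finset.sum_insert h]

lemma I_one : I 1 = Real.sqrt (2 * Real.pi) := by
  rw [I]
  have h := integral_gaussian (1/2 : ℝ)
  have e : ∀ x : ℝ, rexp (-(1/2 : ℝ) * x ^ 2) = rexp (-(x ^ 2 / 2)) := by intro x; ring_nf
  simp only [e] at h
  rw [show ((Real.pi / (1/2)) : ℝ) = 2 * Real.pi by ring] at h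
  simpa using h

lemma stein (p : ℝ[X]) : I (X * p) = I (derivative p) := by
  have h := stein_poly p
  have h2 := integral_sub (integrable_poly_gauss (derivative p)) (integrable_poly_gauss (X * p))
  simp only [Polynomial.eval_sub, sub_mul] at h
  rw [h2] at h
  rw [I, I, ← sub_eq_zero]
  linarith [h]

lemma I_sub (p q : ℝ[X]) : I (p - q) = I p - I q := by
  rw [I, I, I, ← integral_sub (integrable_poly_gauss p) (integrable_poly_gauss q)]
  simp [sub_mul]

lemma I_HP_succ (n : ℕ) : I (HP (n + 1)) = 0 := by
  rw [HP_succ, I_sub, stein, sub_self]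

lemma I_mom : ∀ k n : ℕ, k < n → I (X ^ k * HP n) = 0 := by
  intro k
  induction k using Nat.strong_induction_on with
  | _ k ih =>
    intro n hkn
    match k, n, hkn with
    | 0, n + 1, _ => simpa using I_HP_succ n
    | k + 1, n + 1, hkn =>
      have h1 : (X : ℝ[X]) ^ (k + 1) * HP (n + 1) = X * (X ^ k * HP (n + 1)) := by ring
      rw [h1, stein]
      have h2 : derivative ((X : ℝ[X]) ^ k * HP (n + 1))
          = C (k : ℝ) * (X ^ (k - 1) * HP (n + 1)) + C ((n : ℝ) + 1) * (X ^ k * HP n) := by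
        rw [derivative_mul, derivative_X_pow, HP_deriv]
        ring
      rw [h2, I_add, I_Cmul, I_Cmul]
      have hz1 : I ((X : ℝ[X]) ^ (k - 1) * HP (n + 1)) = 0 := by
        match k with
        | 0 => simpa using I_HP_succ n
        | k + 1 =>
          exact ih (k + 1 - 1) (by omega) (n + 1) (by omega)
      have hz2 : I ((X : ℝ[X]) ^ k * HP n) = 0 := by
        match n, hkn with
        | n + 1, hkn => exact ih k (by omega) (n + 1) (by omega)
      rw [hz1, hz2]
      ring

lemma I_ortho (n : ℕ) (p : ℝ[X]) (hp : p.natDegree < n) : I (p * HP n) = 0 := by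
  conv_lhs => rw [p.as_sum_range' n hp]
  rw [Finset.sum_mul, I_sum]
  refine Finset.sum_eq_zero fun k hk => ?_
  rw [← C_mul_X_pow_eq_monomial, mul_assoc, I_Cmul, I_mom k n (Finset.mem_range.mp hk), mul_zero]


lemma G_eq (p : ℝ[X]) : ∫ t, p.eval t ∂stdGauss = (Real.sqrt (2 * Real.pi))⁻¹ * I p := by
  rw [stdGauss, gaussianReal_of_var_ne_zero 0 one_ne_zero]
  have hmeas : Measurable fun x : ℝ => (gaussianPDFReal 0 1 x).toNNReal :=
    (measurable_gaussianPDFReal 0 1).real_toNNReal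
  have hd : (gaussianPDF 0 1) = fun x => ((gaussianPDFReal 0 1 x).toNNReal : ENNReal) := by
    funext y; rw [gaussianPDF, ENNReal.ofReal]
  rw [hd, integral_withDensity_eq_integral_smul hmeas]
  rw [I, ← integral_const_mul]
  congr 1
  funext y
  rw [NNReal.smul_def, smul_eq_mul, Real.coe_toNNReal _ (gaussianPDFReal_nonneg 0 1 y)]
  rw [gaussianPDFReal]
  push_cast
  rw [show (-(y - 0) ^ 2 / (2 * 1)) = -(y ^ 2 / 2) by ring, show (2 * π * 1 : ℝ) = 2 * π by ring]
  ring

theorem stmt_3 (N : ℕ) (hN : 1 ≤ N)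
    (x : Fin N → ℝ) (hinj : Function.Injective x)
    (hroot : ∀ i, H N (x i) = 0)
    (w : Fin N → ℝ)
    (hw : ∀ i, w i = ((N - 1).factorial : ℝ) / ((N : ℝ) * H (N - 1) (x i) ^ 2)) :
    (∀ i, 0 < w i) ∧
    (∀ p : Polynomial ℝ, p.natDegree ≤ 2 * N - 1 →
      ∑ i, w i * p.eval (x i) = ∫ t, p.eval t ∂stdGauss) ∧
    ∑ i, w i = 1 := by
  obtain ⟨M, rfl⟩ : ∃ M, N = M + 1 := ⟨N - 1, (Nat.succ_pred_eq_of_pos hN).symm⟩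
  simp only [Nat.add_sub_cancel] at hw
  have hne : ∀ i, H M (x i) ≠ 0 := fun i h0 => H_no_common_root M (x i) (hroot i) h0
  have sqpos : (0:ℝ) < Real.sqrt (2 * Real.pi) := Real.sqrt_pos.mpr (by positivity)
  have hMpos : (0:ℝ) < (M:ℝ) + 1 := by positivity
  -- positivity of the weights
  have hwpos : ∀ i, 0 < w i := by
    intro i
    rw [hw i]
    apply div_pos
    · exact_mod_cast M.factorial_pos
    · have h2 : 0 < H M (x i) ^ 2 := by
        have := sq_abs (H M (x i))
        nlinarith [abs_pos.mpr (hne i)]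
      push_cast
      positivity
  -- the cofactor polynomials
  set q : Fin (M+1) → ℝ[X] := fun i => HP (M+1) /ₘ (X - C (x i)) with hqdef
  have hfac : ∀ i, (X - C (x i)) * q i = HP (M+1) := fun i =>
    mul_divByMonic_eq_iff_isRoot.mpr (by rw [IsRoot, HP_eval]; exact_mod_cast hroot i)
  have hqS : ∀ i, q i * C (H M (x i)) =
      ∑ k ∈ Finset.range (M+1), C ((M.factorial : ℝ) / k.factorial * H k (x i)) * HP k := by
    intro i
    apply mul_left_cancel₀ (X_sub_C_ne_zero (x i))
    apply Polynomial.funext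
    intro t
    have hf : (t - x i) * (q i).eval t = H (M+1) t := by
      have := congrArg (Polynomial.eval t) (hfac i)
      simpa [HP_eval] using this
    have hcd := CD M t (x i)
    have hri : H (M+1) (x i) = 0 := by exact_mod_cast hroot i
    rw [hri, mul_zero, sub_zero] at hcd
    simp only [eval_mul, eval_sub, eval_X, eval_C, eval_finset_sum, HP_eval]
    calc (t - x i) * ((q i).eval t * H M (x i))
        = ((t - x i) * (q i).eval t) * H M (x i) := by ring
      _ = H (M+1) t * H M (x i) := by rw [hf]
      _ = (t - x i) * ∑ k ∈ Finset.range (M+1),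
            ((M.factorial : ℝ) / k.factorial) * H k t * H k (x i) := hcd
      _ = (t - x i) * ∑ k ∈ Finset.range (M+1),
            ((M.factorial : ℝ) / k.factorial * H k (x i)) * H k t := by
          congr 1
          exact Finset.sum_congr rfl fun k _ => by ring
  -- integral of the cofactors
  have hIq : ∀ i, I (q i) = (M.factorial : ℝ) * Real.sqrt (2 * Real.pi) / H M (x i) := by
    intro i
    have h1 := congrArg I (hqS i)
    rw [mul_comm, I_Cmul, I_sum] at h1
    rw [Finset.sum_eq_single_of_mem 0 (Finset.mem_range.mpr (Nat.succ_pos M))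
      (fun k _ hk => by
        obtain ⟨j, rfl⟩ := Nat.exists_eq_succ_of_ne_zero hk
        rw [I_Cmul, I_HP_succ, mul_zero])] at h1
    rw [HP_zero, I_Cmul, I_one, H_zero] at h1
    simp only [Nat.factorial_zero, Nat.cast_one, div_one, mul_one] at h1
    field_simp [hne i] at h1 ⊢
    linarith [h1]
  -- cofactor values at the nodes
  have hqj : ∀ i j, j ≠ i → (q i).eval (x j) = 0 := by
    intro i j hij
    have := congrArg (Polynomial.eval (x j)) (hfac i)
    rw [eval_mul, eval_sub, eval_X, eval_C, HP_eval] at this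
    have hrj : H (M+1) (x j) = 0 := by exact_mod_cast hroot j
    rw [hrj] at this
    have hx : x j - x i ≠ 0 := sub_ne_zero.mpr (fun h => hij (hinj h))
    exact (mul_eq_zero.mp this).resolve_left hx
  have hqi : ∀ i, (q i).eval (x i) = ((M:ℝ) + 1) * H M (x i) := by
    intro i
    have := congrArg (fun p => Polynomial.eval (x i) (derivative p)) (hfac i)
    simp only [derivative_mul, derivative_sub, derivative_X, derivative_C, sub_zero, one_mul,
      eval_add, eval_mul, eval_sub, eval_X, eval_C, sub_self, zero_mul, add_zero] at this
    rw [HP_deriv, eval_mul, eval_C, HP_eval] at this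
    linarith [this]
  -- exactness for degree ≤ M
  have exact_low : ∀ r : ℝ[X], r.natDegree < M + 1 →
      ∑ i, w i * r.eval (x i) = (Real.sqrt (2 * Real.pi))⁻¹ * I r := by
    intro r hr
    set L : ℝ[X] := ∑ i, C (r.eval (x i) / (((M:ℝ) + 1) * H M (x i))) * q i with hLdef
    have hLj : ∀ j, L.eval (x j) = r.eval (x j) := by
      intro j
      rw [hLdef, eval_finset_sum]
      rw [Finset.sum_eq_single_of_mem j (Finset.mem_univ j)
        (fun b _ hbj => by rw [eval_mul, hqj b j hbj.symm, mul_zero])]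
      rw [eval_mul, eval_C, hqi j]
      field_simp [hne j]
    have hdegL : L.natDegree ≤ M := by
      apply natDegree_sum_le_of_forall_le
      intro i _
      refine (natDegree_C_mul_le _ _).trans ?_
      rw [natDegree_divByMonic _ (monic_X_sub_C (x i)), HP_natDegree, natDegree_X_sub_C]
      omega
    have hrL : r = L := by
      have hz := eq_zero_of_natDegree_lt_card_of_eval_eq_zero (r - L) hinj
        (fun j => by rw [eval_sub, hLj j, sub_self])
        (by
          have := natDegree_sub_le r L
          rw [Fintype.card_fin]
          omega)
      have := sub_eq_zero.mp hz
      exact this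
    have hIrL : I r = I L := by rw [← hrL]
    rw [hIrL, hLdef, I_sum, Finset.mul_sum]
    refine Finset.sum_congr rfl fun i _ => ?_
    rw [I_Cmul, hIq i, hw i]
    have hi := hne i
    field_simp
    push_cast
    ring
  have hPM : IsProbabilityMeasure stdGauss := by rw [stdGauss]; infer_instance
  have exact_all : ∀ p : ℝ[X], p.natDegree ≤ 2 * (M+1) - 1 →
      ∑ i, w i * p.eval (x i) = ∫ t, p.eval t ∂stdGauss := by
    intro p hp
    have hsplit := modByMonic_add_div p (HP (M+1))
    have hHP1 : HP (M+1) ≠ 1 := by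
      intro h1
      have := HP_natDegree (M+1)
      rw [h1, natDegree_one] at this
      omega
    have hdr : (p %ₘ HP (M+1)).natDegree < M + 1 := by
      have := natDegree_modByMonic_lt p (HP_monic (M+1)) hHP1
      rwa [HP_natDegree] at this
    have hdu : (p /ₘ HP (M+1)).natDegree < M + 1 := by
      rw [natDegree_divByMonic p (HP_monic (M+1)), HP_natDegree]
      omega
    have hIu : I (HP (M+1) * (p /ₘ HP (M+1))) = 0 := by
      rw [mul_comm]; exact I_ortho (M+1) _ hdu
    have hIp : I p = I (p %ₘ HP (M+1)) := by
      conv_lhs => rw [← hsplit]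
      rw [I_add, hIu, add_zero]
    have hvals : ∀ i, p.eval (x i) = (p %ₘ HP (M+1)).eval (x i) := by
      intro i
      conv_lhs => rw [← hsplit]
      rw [eval_add, eval_mul, HP_eval]
      have hri : H (M+1) (x i) = 0 := by exact_mod_cast hroot i
      rw [hri, zero_mul, add_zero]
    rw [G_eq, hIp, ← exact_low _ hdr]
    exact Finset.sum_congr rfl fun i _ => by rw [hvals i]
  refine ⟨hwpos, exact_all, ?_⟩
  have h1 := exact_all 1 (by rw [natDegree_one]; omega)
  simp only [eval_one, mul_one] at h1
  rw [h1]
  simp
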